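/- For an integer n ≥ 0, let r₄(n) denote the number of quadruples (i, j, k, l) of integers with i² + j² + k² + l² = n (order and signs counted as distinct). Let T be the formal power series with integer coefficients whose coefficient of x^n is r₄(n) when n is even and 0 when n is odd (this is the theta series of the D₄ lattice, T = 1 + 24x² + 24x⁴ + 96x⁶ + 24x⁸ + 144x¹⁰ + ⋯). Then there exists a formal power series g with integer coefficients such that g⁴ = T. -/

import Mathlib

/-- `r₄ n` is the number of ordered quadruples of integers whose squares sum to `n`. -/
noncomputable def r4 (n : ℕ) : ℕ :=
  Nat.card {q : ℤ × ℤ × ℤ × ℤ //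
    q.1 ^ 2 + q.2.1 ^ 2 + q.2.2.1 ^ 2 + q.2.2.2 ^ 2 = (n : ℤ)}

/-- The theta series of the D₄ lattice: coefficient of xⁿ is r₄(n) for even n, 0 for odd n. -/
noncomputable def thetaD4 : PowerSeries ℤ :=
  PowerSeries.mk fun n => if Even n then (r4 n : ℤ) else 0

open PowerSeries Quaternion MulAction Subgroup

noncomputable section

/-- If `u` has zero constant term, `1 + 24u` is a fourth power in `ℤ⟦X⟧`. -/
lemma fourth_root_exists (u : PowerSeries ℤ) (hu : constantCoeff u = 0) :
    ∃ g : PowerSeries ℤ, g ^ 4 = 1 + 24 * u := by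
  obtain ⟨v, rfl⟩ : (X : PowerSeries ℤ) ∣ u := X_dvd_iff.mpr hu
  set Φ : PowerSeries ℤ → PowerSeries ℤ :=
    fun p => 1 - 9*(X*v)*p^2 - 36*(X*v)^2*p^3 - 54*(X*v)^3*p^4 with hΦ
  have contr : ∀ (n : ℕ) (p q : PowerSeries ℤ), X^n ∣ p - q → X^(n+1) ∣ Φ p - Φ q := by
    intro n p q ⟨d, hd⟩
    refine ⟨-(d * v * (9*(p+q) + 36*(X*v)*(p^2+p*q+q^2) + 54*(X*v)^2*(p^3+p^2*q+p*q^2+q^3))), ?_⟩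
    simp only [hΦ]
    linear_combination (-(9*(X*v)*(p+q) + 36*(X*v)^2*(p^2+p*q+q^2)
      + 54*(X*v)^3*(p^3+p^2*q+p*q^2+q^3))) * hd
  set s : ℕ → PowerSeries ℤ := fun n => Φ^[n] 1 with hs
  have hstep : ∀ n : ℕ, X^(n+1) ∣ s (n+1) - s n := by
    intro n
    induction n with
    | zero =>
      have e0 : s 0 = 1 := rfl
      have e1 : s 1 = Φ 1 := rfl
      rw [e0, e1, hΦ]
      exact ⟨-(v*(9 + 36*(X*v) + 54*(X*v)^2)), by ring⟩
    | succ n ih =>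
      have := contr (n+1) (s (n+1)) (s n) ih
      simpa only [hs, Function.iterate_succ_apply'] using this
  have hstab : ∀ m n : ℕ, m + 1 ≤ n → coeff m (s n) = coeff m (s (m+1)) := by
    intro m n hmn
    induction n with
    | zero => omega
    | succ n ih =>
      rcases Nat.lt_or_ge (m+1) (n+1) with h | h
      · have h0 : coeff m (s (n+1) - s n) = 0 :=
          (X_pow_dvd_iff.mp (hstep n)) m (by omega)
        rw [map_sub, sub_eq_zero] at h0
        rw [h0, ih (by omega)]
      · have : m + 1 = n + 1 := by omega
        rw [this]
  set h : PowerSeries ℤ := mk fun m => coeff m (s (m+1)) with hh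
  have hfix : h = Φ h := by
    ext m
    have h1 : X^(m+1) ∣ h - s (m+1) := by
      rw [X_pow_dvd_iff]
      intro k hk
      rw [map_sub, sub_eq_zero, hh, coeff_mk]
      exact (hstab k (m+1) (by omega)).symm
    have h2 := contr (m+1) h (s (m+1)) h1
    have h3 : coeff m (Φ h - Φ (s (m+1))) = 0 :=
      (X_pow_dvd_iff.mp h2) m (by omega)
    rw [map_sub, sub_eq_zero] at h3
    have h4 : Φ (s (m+1)) = s (m+2) := by
      simp only [hs, ← Function.iterate_succ_apply']
    rw [hh, coeff_mk, h3, h4, hstab m (m+2) (by omega)]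
  refine ⟨1 + 6*(X*v)*h, ?_⟩
  have hEq : h = 1 - 9*(X*v)*h^2 - 36*(X*v)^2*h^3 - 54*(X*v)^3*h^4 := hfix
  linear_combination (24*(X*v)) * hEq

abbrev Q := Quaternion ℚ

def mkQ (a b c d : ℚ) : Q := ⟨a,b,c,d⟩

@[simp] lemma mkQ_re (a b c d : ℚ) : (mkQ a b c d).re = a := rfl
@[simp] lemma mkQ_imI (a b c d : ℚ) : (mkQ a b c d).imI = b := rfl
@[simp] lemma mkQ_imJ (a b c d : ℚ) : (mkQ a b c d).imJ = c := rfl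
@[simp] lemma mkQ_imK (a b c d : ℚ) : (mkQ a b c d).imK = d := rfl

def qi : Q := mkQ 0 1 0 0
def qj : Q := mkQ 0 0 1 0
def qo : Q := mkQ (-1/2) (1/2) (1/2) (1/2)

lemma qi_pow_four : qi ^ 4 = 1 := by
  ext <;> simp [qi, pow_succ]

lemma qi_sq : qi ^ 2 = -1 := by
  ext <;> simp [qi, pow_succ]

lemma qj_mul_qj : qj * qj = -1 := by
  ext <;> simp [qj]

lemma qo_cube : qo ^ 3 = 1 := by
  ext <;> simp [qo, pow_succ] <;> norm_num

def uI : Qˣ := ⟨qi, qi^3, by rw [← pow_succ', qi_pow_four], by rw [← pow_succ, qi_pow_four]⟩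
def uJ : Qˣ := ⟨qj, -qj, by rw [mul_neg, qj_mul_qj]; norm_num, by rw [neg_mul, qj_mul_qj]; norm_num⟩
def uO : Qˣ := ⟨qo, qo^2, by rw [← pow_succ', qo_cube], by rw [← pow_succ, qo_cube]⟩

lemma uI_pow_four : uI ^ 4 = 1 := Units.ext (by rw [Units.val_pow_eq_pow_val]; exact qi_pow_four)

lemma uO_pow_three : uO ^ 3 = 1 := Units.ext (by rw [Units.val_pow_eq_pow_val]; exact qo_cube)

lemma uO_ne_one : uO ≠ 1 := by
  intro h
  have : qo = 1 := congrArg Units.val h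
  rw [Quaternion.ext_iff, qo] at this
  norm_num at this

lemma orderOf_uO : orderOf uO = 3 := orderOf_eq_prime uO_pow_three uO_ne_one

lemma orderOf_uI : orderOf uI = 4 := by
  have h4 : orderOf uI ∣ 4 := orderOf_dvd_of_pow_eq_one uI_pow_four
  have hne2 : uI ^ 2 ≠ 1 := by
    intro h
    have h' : qi ^ 2 = 1 := by
      have := congrArg Units.val h
      rwa [Units.val_pow_eq_pow_val] at this
    rw [qi_sq, Quaternion.ext_iff] at h'
    norm_num at h'
  have hne1 : uI ≠ 1 := fun h => hne2 (by rw [h]; simp)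
  have hle := Nat.le_of_dvd (by norm_num) h4
  have hpos : 0 < orderOf uI :=
    (isOfFinOrder_iff_pow_eq_one.mpr ⟨4, by norm_num, uI_pow_four⟩).orderOf_pos
  interval_cases h : orderOf uI
  · exact absurd (orderOf_eq_one_iff.mp h) hne1
  · exact absurd (h ▸ pow_orderOf_eq_one uI) hne2
  · exact absurd h4 (by norm_num)
  · rfl

lemma zpow_reduce {G : Type*} [Group G] (u : G) (m : ℕ) (hm : u ^ m = 1) (h0 : 0 < m)
    (k : ℤ) : u ^ k = u ^ ((k % m).toNat) := by
  have hnn : (0:ℤ) ≤ k % m := Int.emod_nonneg k (by exact_mod_cast h0.ne')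
  conv_lhs => rw [← Int.mul_ediv_add_emod k m]
  rw [zpow_add, zpow_mul, zpow_natCast, hm, one_zpow, one_mul,
    ← zpow_natCast, Int.toNat_of_nonneg hnn]

/-- conjugation relation : uI^(-k) * uJ = uJ * uI^k -/
lemma conj_rel (k : ℤ) : uI ^ (-k) * uJ = uJ * uI ^ k := by
  have base : uJ⁻¹ * uI * uJ = uI⁻¹ := by
    apply Units.ext
    show (-qj) * qi * qj = qi^3
    ext <;> simp [qi, qj, pow_succ]
  have h := map_zpow (MulAut.conj uJ⁻¹) uI (-k)
  simp only [MulAut.conj_apply, inv_inv, base] at h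
  rw [inv_zpow, ← zpow_neg, neg_neg] at h
  calc uI ^ (-k) * uJ = uJ * (uJ⁻¹ * uI ^ (-k) * uJ) := by group
  _ = uJ * uI ^ k := by rw [h]

def P (n : ℕ) (z : Q) : Prop :=
  ∃ a b c d : ℤ, z = mkQ a b c d ∧ a^2+b^2+c^2+d^2 = (n:ℤ)

lemma P.mulI {n : ℕ} {z : Q} (h : P n z) : P n (z * qi) := by
  obtain ⟨a,b,c,d,rfl,hn⟩ := h
  refine ⟨-b, a, d, -c, ?_, by linarith⟩
  ext <;> simp [qi] <;> push_cast <;> ring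

lemma P.mulJ {n : ℕ} {z : Q} (h : P n z) : P n (z * qj) := by
  obtain ⟨a,b,c,d,rfl,hn⟩ := h
  refine ⟨-c, -d, a, b, ?_, by linarith⟩
  ext <;> simp [qj] <;> push_cast <;> ring

lemma P.mulO {n : ℕ} (hn : Even n) {z : Q} (h : P n z) : P n (z * qo) := by
  obtain ⟨a,b,c,d,rfl,hE⟩ := h
  have hev : Even (a+b+c+d) := by
    have h2 : Even (a^2+b^2+c^2+d^2) := by
      rw [hE]; exact (Int.even_coe_nat n).mpr hn
    simp only [Int.even_add, Int.even_pow] at h2 ⊢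
    tauto
  obtain ⟨t, ht⟩ := hev
  refine ⟨-t, t-b-d, t-b-c, t-c-d, ?_, by linear_combination hE - (a + 2*t - b - c - d) * ht⟩
  have ha : (a : ℚ) = 2*t-b-c-d := by
    have : a = 2*t-b-c-d := by omega
    exact_mod_cast congrArg (Int.cast : ℤ → ℚ) this
  ext <;> simp [qo] <;> push_cast <;> rw [ha] <;> ring

lemma P.mul_pow {n : ℕ} {w : Q} (hcl : ∀ z, P n z → P n (z * w)) (j : ℕ) :
    ∀ z, P n z → P n (z * w ^ j) := by
  induction j with
  | zero => intro z hz; simpa using hz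
  | succ j ih =>
    intro z hz
    rw [pow_succ, ← mul_assoc]
    exact hcl _ (ih z hz)

lemma P.mul_mem_zpowers {n : ℕ} {u : Qˣ} {m : ℕ} (hm : u ^ m = 1) (h0 : 0 < m)
    (hcl : ∀ z, P n z → P n (z * u)) {v : Qˣ} (hv : v ∈ zpowers u) :
    ∀ z, P n z → P n (z * v) := by
  obtain ⟨k, rfl⟩ := hv
  show ∀ z, P n z → P n (z * ((u ^ k : Qˣ) : Q))
  rw [zpow_reduce u m hm h0 k, Units.val_pow_eq_pow_val]
  exact P.mul_pow hcl _

abbrev Sol (n : ℕ) := {z : Q // P n z}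

/-- the action of `zpowers u` on `Sol n` by right multiplication with the inverse -/
def solAct (n : ℕ) (u : Qˣ)
    (hcl : ∀ v : Qˣ, v ∈ zpowers u → ∀ z, P n z → P n (z * v)) :
    MulAction (zpowers u) (Sol n) where
  smul g z := ⟨z.1 * ((g⁻¹ : zpowers u) : Qˣ), hcl _ (g⁻¹).2 _ z.2⟩
  one_smul z := by
    apply Subtype.ext
    show z.1 * ((1⁻¹ : zpowers u) : Qˣ) = z.1
    simp
  mul_smul g h z := by
    apply Subtype.ext
    show z.1 * (((g*h)⁻¹ : zpowers u) : Qˣ) = (z.1 * ((h⁻¹ : zpowers u) : Qˣ)) * ((g⁻¹ : zpowers u) : Qˣ)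
    simp [mul_inv_rev, mul_assoc]

open MulAction in
lemma card_eq_of_free {G S : Type*} [Group G] [MulAction G S]
    (hfree : ∀ (g : G) (s : S), g • s = s → g = 1) :
    Nat.card S = Nat.card G * Nat.card (orbitRel.Quotient G S) := by
  have hstab : ∀ s : S, stabilizer G s = ⊥ := by
    intro s
    ext g
    simp only [mem_stabilizer_iff, Subgroup.mem_bot]
    exact ⟨fun h => hfree g s h, fun h => by simp [h]⟩
  have e : S ≃ (orbitRel.Quotient G S) × G := by
    refine (selfEquivSigmaOrbitsQuotientStabilizer G S).trans ?_
    refine (Equiv.sigmaCongrRight fun ω => ?_).trans (Equiv.sigmaEquivProd _ _)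
    rw [hstab]
    exact (QuotientGroup.quotientBot (G := G)).toEquiv
  rw [Nat.card_congr e, Nat.card_prod, mul_comm]

lemma sol_ne_zero {n : ℕ} (h0 : 0 < n) (z : Sol n) : z.1 ≠ 0 := by
  obtain ⟨a,b,c,d,hz,hn⟩ := z.2
  intro h
  rw [h] at hz
  rw [Quaternion.ext_iff] at hz
  obtain ⟨h1, h2, h3, h4⟩ := hz
  simp only [Quaternion.re_zero, Quaternion.imI_zero, Quaternion.imJ_zero,
    Quaternion.imK_zero, mkQ_re, mkQ_imI, mkQ_imJ, mkQ_imK] at h1 h2 h3 h4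
  have ha : a = 0 := by exact_mod_cast h1.symm
  have hb : b = 0 := by exact_mod_cast h2.symm
  have hc : c = 0 := by exact_mod_cast h3.symm
  have hd : d = 0 := by exact_mod_cast h4.symm
  rw [ha, hb, hc, hd] at hn
  norm_num at hn
  omega

theorem card_sol_dvd {n : ℕ} (hn : Even n) (h0 : 0 < n) : 24 ∣ Nat.card (Sol n) := by
  have h3 : 3 ∣ Nat.card (Sol n) := by
    letI := solAct n uO
      (fun v hv => P.mul_mem_zpowers uO_pow_three (by norm_num) (fun z hz => hz.mulO hn) hv)
    have hfree : ∀ (g : zpowers uO) (z : Sol n), g • z = z → g = 1 := by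
      intro g z hg
      have hval : z.1 * (((g⁻¹ : zpowers uO) : Qˣ) : Q) = z.1 * 1 := by
        rw [mul_one]; exact congrArg Subtype.val hg
      have h1 : (((g⁻¹ : zpowers uO) : Qˣ) : Q) = 1 := mul_left_cancel₀ (sol_ne_zero h0 z) hval
      have h2 : ((g⁻¹ : zpowers uO) : Qˣ) = 1 := Units.ext h1
      have h3 : (g⁻¹ : zpowers uO) = 1 := by
        exact_mod_cast OneMemClass.coe_eq_one.mp h2
      exact inv_eq_one.mp h3
    rw [card_eq_of_free hfree, Nat.card_zpowers, orderOf_uO]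
    exact dvd_mul_right 3 _
  have h8 : 8 ∣ Nat.card (Sol n) := by
    letI := solAct n uI
      (fun v hv => P.mul_mem_zpowers uI_pow_four (by norm_num) (fun z hz => hz.mulI) hv)
    have hfree : ∀ (g : zpowers uI) (z : Sol n), g • z = z → g = 1 := by
      intro g z hg
      have hval : z.1 * (((g⁻¹ : zpowers uI) : Qˣ) : Q) = z.1 * 1 := by
        rw [mul_one]; exact congrArg Subtype.val hg
      have h1 : (((g⁻¹ : zpowers uI) : Qˣ) : Q) = 1 := mul_left_cancel₀ (sol_ne_zero h0 z) hval
      have h2 : (g⁻¹ : zpowers uI) = 1 := by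
        exact_mod_cast OneMemClass.coe_eq_one.mp (Units.ext h1)
      exact inv_eq_one.mp h2
    have hcard : Nat.card (Sol n) =
        4 * Nat.card (orbitRel.Quotient (zpowers uI) (Sol n)) := by
      rw [card_eq_of_free hfree, Nat.card_zpowers, orderOf_uI]
    letI : Setoid (Sol n) := MulAction.orbitRel (zpowers uI) (Sol n)
    set Ω := orbitRel.Quotient (zpowers uI) (Sol n) with hΩ
    -- the involution induced by right multiplication by j
    have wd : ∀ (x y : Sol n), Setoid.r x y →
        Setoid.r (⟨x.1 * qj, x.2.mulJ⟩ : Sol n) (⟨y.1 * qj, y.2.mulJ⟩ : Sol n) := by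
      intro x y hxy
      have hxy' : x ∈ MulAction.orbit (zpowers uI) y := hxy
      obtain ⟨g, hg⟩ := MulAction.mem_orbit_iff.mp hxy'
      obtain ⟨k, hk'⟩ := g.2
      have hk : uI ^ k = (g : Qˣ) := hk'
      refine MulAction.mem_orbit_iff.mpr ⟨⟨uI ^ (-k), ⟨-k, rfl⟩⟩, ?_⟩
      apply Subtype.ext
      have hginv : (((⟨uI ^ (-k), ⟨-k, rfl⟩⟩ : zpowers uI)⁻¹ : zpowers uI) : Qˣ) = uI ^ k := by
        have h0 : (((⟨uI ^ (-k), ⟨-k, rfl⟩⟩ : zpowers uI)⁻¹ : zpowers uI) : Qˣ)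
            = ((uI ^ (-k) : Qˣ))⁻¹ := by simp
        rw [h0, zpow_neg, inv_inv]
      show (y.1 * qj) * ((((⟨uI ^ (-k), ⟨-k, rfl⟩⟩ : zpowers uI)⁻¹ : zpowers uI) : Qˣ) : Q)
          = x.1 * qj
      rw [hginv]
      have hx : x.1 = y.1 * ((uI ^ (-k) : Qˣ) : Q) := by
        have h' := congrArg Subtype.val hg
        rw [← h']
        show y.1 * _ = y.1 * _
        congr 2
        have h0 : ((g⁻¹ : zpowers uI) : Qˣ) = ((g : Qˣ))⁻¹ := by simp
        rw [h0, ← hk, ← zpow_neg]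
      rw [hx, mul_assoc, mul_assoc]
      congr 1
      have := congrArg Units.val (conj_rel k)
      simp only [Units.val_mul] at this
      exact this.symm
    let J : Ω → Ω := Quotient.map' (fun z => ⟨z.1 * qj, z.2.mulJ⟩) wd
    have hinv : Function.Involutive J := by
      intro ω
      induction ω using Quotient.inductionOn' with
      | h z =>
        show Quotient.mk'' (⟨_ * qj * qj, _⟩ : Sol n) = Quotient.mk'' z
        apply Quotient.sound'
        refine MulAction.mem_orbit_iff.mpr ?_
        refine ⟨⟨uI ^ (-2 : ℤ), Subgroup.mem_zpowers_iff.mpr ⟨-2, rfl⟩⟩, ?_⟩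
        apply Subtype.ext
        show z.1 * ((((⟨uI ^ (-2:ℤ), _⟩ : zpowers uI)⁻¹ : zpowers uI) : Qˣ) : Q) = z.1 * qj * qj
        have hval : ((((⟨uI ^ (-2:ℤ), Subgroup.mem_zpowers_iff.mpr ⟨-2, rfl⟩⟩ :
            zpowers uI)⁻¹ : zpowers uI) : Qˣ) : Q) = ((uI ^ (2:ℤ) : Qˣ) : Q) := by
          norm_num
        rw [hval, mul_assoc, qj_mul_qj]
        congr 1
        show ((uI ^ (2:ℤ) : Qˣ) : Q) = -1
        rw [show ((2:ℤ)) = ((2:ℕ):ℤ) from rfl, zpow_natCast, Units.val_pow_eq_pow_val]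
        show qi ^ 2 = -1
        exact qi_sq
    have hfp : ∀ ω : Ω, J ω ≠ ω := by
      intro ω
      induction ω using Quotient.inductionOn' with
      | h z =>
        intro hJ
        have hr : Setoid.r (⟨z.1 * qj, z.2.mulJ⟩ : Sol n) z := Quotient.exact' hJ
        have hr' : (⟨z.1 * qj, z.2.mulJ⟩ : Sol n) ∈ MulAction.orbit (zpowers uI) z := hr
        obtain ⟨g, hg⟩ := MulAction.mem_orbit_iff.mp hr'
        have hval : z.1 * (((g⁻¹ : zpowers uI) : Qˣ) : Q) = z.1 * qj :=
          congrArg Subtype.val hg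
        have h1 : (((g⁻¹ : zpowers uI) : Qˣ) : Q) = qj :=
          mul_left_cancel₀ (sol_ne_zero h0 z) hval
        obtain ⟨k, hk'⟩ := (g⁻¹ : zpowers uI).2
        have hk : ((uI ^ k : Qˣ) : Q) = (((g⁻¹ : zpowers uI) : Qˣ) : Q) := congrArg Units.val hk'
        rw [← hk] at h1
        rw [zpow_reduce uI 4 uI_pow_four (by norm_num) k, Units.val_pow_eq_pow_val] at h1
        have hlt : (k % 4).toNat < 4 := by omega
        interval_cases h : (k % 4).toNat <;>
          · rw [Quaternion.ext_iff] at h1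
            norm_num [uI, qi, qj, pow_succ] at h1
    have h2 : 2 ∣ Nat.card Ω := by
      rcases isEmpty_or_nonempty Ω with hE | hNE
      · simp [Nat.card_of_isEmpty]
      · let e : Equiv.Perm Ω := hinv.toPerm
        have he2 : e ^ 2 = 1 := by
          ext ω
          simp only [sq, Equiv.Perm.mul_apply, Equiv.Perm.one_apply]
          show J (J ω) = ω
          exact hinv ω
        have hene : e ≠ 1 := by
          intro h
          obtain ω := Classical.arbitrary Ω
          exact hfp ω (by rw [show J ω = e ω from rfl, h]; rfl)
        have hord : orderOf e = 2 := orderOf_eq_prime he2 hene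
        have hfree2 : ∀ (g : zpowers e) (ω : Ω), g • ω = ω → g = 1 := by
          intro g ω hg
          obtain ⟨k, hk'⟩ := g.2
          have hk : e ^ k = (g : Equiv.Perm Ω) := hk'
          have hred : e ^ k = e ^ ((k % 2).toNat) := zpow_reduce e 2 he2 (by norm_num) k
          have hlt : (k % 2).toNat < 2 := by omega
          interval_cases hcase : (k % 2).toNat
          · have : (g : Equiv.Perm Ω) = 1 := by rw [← hk, hred, pow_zero]
            exact_mod_cast OneMemClass.coe_eq_one.mp this
          · exfalso
            have hge : (g : Equiv.Perm Ω) = e := by rw [← hk, hred, pow_one]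
            have : e ω = ω := by
              have := hg
              rw [Subgroup.smul_def, hge] at this
              exact this
            exact hfp ω this
        have := card_eq_of_free hfree2
        rw [this, Nat.card_zpowers, hord]
        exact dvd_mul_right 2 _
      
    obtain ⟨m, hm⟩ := h2
    rw [hcard, hm]
    exact ⟨m, by ring⟩
  exact (Nat.coprime_comm.mp (by norm_num)).mul_dvd_of_dvd_of_dvd h8 h3

lemma r4_eq_card_sol (n : ℕ) : r4 n = Nat.card (Sol n) := by
  rw [r4]
  apply Nat.card_congr
  refine Equiv.ofBijective
    (fun q => ⟨mkQ (q.1.1 : ℚ) q.1.2.1 q.1.2.2.1 q.1.2.2.2,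
      ⟨q.1.1, q.1.2.1, q.1.2.2.1, q.1.2.2.2, rfl, q.2⟩⟩) ⟨?_, ?_⟩
  · rintro ⟨⟨a,b,c,d⟩, hq⟩ ⟨⟨a',b',c',d'⟩, hq'⟩ h
    simp only [Subtype.mk.injEq, Quaternion.ext_iff] at h
    obtain ⟨h1,h2,h3,h4⟩ := h
    rfl
  · rintro ⟨z, hz⟩
    obtain ⟨a,b,c,d,hz', hn⟩ := hz
    exact ⟨⟨(a,b,c,d), hn⟩, Subtype.ext hz'.symm⟩

lemma r4_zero : r4 0 = 1 := by
  rw [r4]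
  rw [Nat.card_eq_one_iff_unique]
  constructor
  · constructor
    rintro ⟨⟨a,b,c,d⟩, hq⟩ ⟨⟨a',b',c',d'⟩, hq'⟩
    simp only [Nat.cast_zero] at hq hq'
    have ha : a = 0 ∧ b = 0 ∧ c = 0 ∧ d = 0 := by
      refine ⟨?_, ?_, ?_, ?_⟩ <;> nlinarith [sq_nonneg a, sq_nonneg b, sq_nonneg c, sq_nonneg d]
    have ha' : a' = 0 ∧ b' = 0 ∧ c' = 0 ∧ d' = 0 := by
      refine ⟨?_, ?_, ?_, ?_⟩ <;> nlinarith [sq_nonneg a', sq_nonneg b', sq_nonneg c', sq_nonneg d']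
    obtain ⟨rfl,rfl,rfl,rfl⟩ := ha
    obtain ⟨rfl,rfl,rfl,rfl⟩ := ha'
    rfl
  · exact ⟨⟨(0,0,0,0), by norm_num⟩⟩

theorem thetaD4_is_fourth_power :
    ∃ g : PowerSeries ℤ, g ^ 4 = thetaD4 := by
  have hdvd : ∀ k : ℕ, k ≠ 0 → (24 : ℤ) ∣ coeff k thetaD4 := by
    intro k hk
    rw [thetaD4, coeff_mk]
    by_cases hev : Even k
    · rw [if_pos hev]
      have : (24 : ℕ) ∣ r4 k := by
        rw [r4_eq_card_sol]
        exact card_sol_dvd hev (Nat.pos_of_ne_zero hk)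
      exact_mod_cast Int.natCast_dvd_natCast.mpr this
    · rw [if_neg hev]; exact dvd_zero 24
  set u : PowerSeries ℤ :=
    PowerSeries.mk (fun k => if k = 0 then 0 else (coeff k thetaD4) / 24) with hu
  have hu0 : constantCoeff u = 0 := by
    rw [hu, ← coeff_zero_eq_constantCoeff_apply, coeff_mk, if_pos rfl]
  have hth : thetaD4 = 1 + 24 * u := by
    have h24 : (24 : PowerSeries ℤ) = C 24 := (map_ofNat C 24).symm
    ext k
    rw [map_add, h24, coeff_C_mul, hu, coeff_mk]
    rcases Nat.eq_zero_or_pos k with rfl | hk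
    · rw [if_pos rfl, thetaD4, coeff_mk, if_pos (Even.zero), r4_zero]
      simp
    · rw [if_neg hk.ne', coeff_one, if_neg hk.ne', Int.mul_ediv_cancel' (hdvd k hk.ne')]
      ring
  obtain ⟨g, hg⟩ := fourth_root_exists u hu0
  exact ⟨g, by rw [hg, hth]⟩

end
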